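/- Let k ≥ 1 and let X be a finite pure d-dimensional simplicial complex with d ≥ k+1 in which, for every j, the probability distribution on X(j) is uniform. Set ε = max( sqrt(8·|X(k−1)|/|X(k)|), sqrt(9/|X(k+1)|) ) and assume ε ≤ 1/2. Then there exists f ∈ C^k(X, F_2) such that dist(f, δg) ≥ 1/2 − ε for every g ∈ C^{k−1}(X, F_2), while wt(δf) ≤ 1/2 + ε; consequently the coboundary expansion ratio wt(δf)/dist(f, B^k(X,F_2)) of this f is at most (1/2 + ε)/(1/2 − ε). -/

import Mathlib

open scoped Classical BigOperators

universe u v w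

noncomputable section

variable {V : Type w} [Fintype V] [DecidableEq V]

/-- A finite weighted simplicial complex on the vertex set `V`: a collection of faces
together with a weight function (intended to be supported on top-dimensional faces). -/
structure WSC (V : Type w) [Fintype V] [DecidableEq V] where
  faces : Finset (Finset V)
  weight : Finset V → ℝ

namespace WSC

/-- `X` is a pure `d`-dimensional weighted simplicial complex: it is nonempty and downward
closed, every face is contained in a face with `d+1` vertices, and the weight function is a
(positive, unnormalized) density supported exactly on the `d`-dimensional faces. -/
def IsPureDim (X : WSC V) (d : ℕ) : Prop :=
  ∅ ∈ X.faces ∧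
  (∀ s ∈ X.faces, ∀ t, t ⊆ s → t ∈ X.faces) ∧
  (∀ s ∈ X.faces, ∃ m ∈ X.faces, s ⊆ m ∧ m.card = d + 1) ∧
  (∀ s, 0 ≤ X.weight s) ∧
  (∀ s, X.weight s ≠ 0 → s ∈ X.faces ∧ s.card = d + 1) ∧
  (∀ s ∈ X.faces, s.card = d + 1 → 0 < X.weight s)

/-- The induced (unnormalized) weight of a set of vertices: the total weight of the
top-dimensional faces containing it.  For a `k`-face this is proportional to the induced
density `Pr_k`. -/
def inducedWeight (X : WSC V) (t : Finset V) : ℝ :=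
  ∑ s : Finset V, if t ⊆ s then X.weight s else 0

/-- An ordered tuple of vertices spanning a face of `X`. -/
def IsFaceTuple (X : WSC V) {n : ℕ} (σ : Fin n → V) : Prop :=
  Function.Injective σ ∧ Finset.image σ Finset.univ ∈ X.faces

/-- The weight of an ordered face (each ordering of a face is equally likely). -/
def tupleWeight (X : WSC V) {n : ℕ} (σ : Fin n → V) : ℝ :=
  if X.IsFaceTuple σ then X.inducedWeight (Finset.image σ Finset.univ) else 0

/-- The probability that a uniformly weighted random ordered `(n-1)`-dimensional face
of `X` satisfies `A`. -/
def faceProb (X : WSC V) (n : ℕ) (A : (Fin n → V) → Prop) : ℝ :=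
  (∑ σ : Fin n → V, if A σ then X.tupleWeight σ else 0) /
    (∑ σ : Fin n → V, X.tupleWeight σ)

/-- Conditional probability of `A` given `B` for a random ordered `(n-1)`-face. -/
def condProb (X : WSC V) (n : ℕ) (A B : (Fin n → V) → Prop) : ℝ :=
  (∑ σ : Fin n → V, if A σ ∧ B σ then X.tupleWeight σ else 0) /
    (∑ σ : Fin n → V, if B σ then X.tupleWeight σ else 0)

/-- The link of a face, with its induced weight function. -/
def link (X : WSC V) (r : Finset V) : WSC V where
  faces := Finset.univ.filter fun t => Disjoint t r ∧ t ∪ r ∈ X.faces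
  weight := fun t => if Disjoint t r then X.weight (t ∪ r) else 0

/-- The `m`-skeleton of `X` (as an unweighted complex). -/
def skeleton (X : WSC V) (m : ℕ) : WSC V where
  faces := X.faces.filter fun s => s.card ≤ m + 1
  weight := fun _ => 0

end WSC

section Cochains

variable {Γ : Type u} [AddCommGroup Γ]

/-- An asymmetric function on ordered faces (a cochain):
reordering by a permutation multiplies the value by the sign of the permutation. -/
def IsAsym {n : ℕ} (f : (Fin n → V) → Γ) : Prop :=
  ∀ (σ : Fin n → V) (π : Equiv.Perm (Fin n)),
    f (σ ∘ π) = ((Equiv.Perm.sign π : ℤˣ) : ℤ) • f σ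

/-- The coboundary map `δ`, sending functions on ordered `(n-1)`-dimensional faces to
functions on ordered `n`-dimensional faces. -/
def cobound {n : ℕ} (f : (Fin n → V) → Γ) : (Fin (n + 1) → V) → Γ :=
  fun σ => ∑ i : Fin (n + 1), ((-1 : ℤ) ^ (i : ℕ)) • f (σ ∘ Fin.succAbove i)

/-- The (normalized) weight of the support of a cochain. -/
def WSC.cwt (X : WSC V) {n : ℕ} (f : (Fin n → V) → Γ) : ℝ :=
  X.faceProb n (fun σ => f σ ≠ 0)

/-- The normalized Hamming distance between two cochains. -/
def WSC.cdist (X : WSC V) {n : ℕ} (f g : (Fin n → V) → Γ) : ℝ :=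
  X.faceProb n (fun σ => f σ ≠ g σ)

/-- `f` is a `k`-cocycle of `X` (an element of `Z^k(X,Γ)`). -/
def WSC.IsCocycle (X : WSC V) (k : ℕ) (f : (Fin (k + 1) → V) → Γ) : Prop :=
  IsAsym f ∧ ∀ σ : Fin (k + 2) → V, X.IsFaceTuple σ → cobound f σ = 0

/-- `f` is a `k`-coboundary of `X` (an element of `B^k(X,Γ)`). -/
def WSC.IsCobound (X : WSC V) (k : ℕ) (f : (Fin (k + 1) → V) → Γ) : Prop :=
  ∃ g : (Fin k → V) → Γ, IsAsym g ∧
    ∀ σ : Fin (k + 1) → V, X.IsFaceTuple σ → f σ = cobound g σ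

end Cochains

/-- `X` is a coboundary expander on `k`-cochains with coboundary expansion constant
`h^k(X,Γ) ≥ β`: every cocycle is a coboundary, and `β · dist(f, B^k) ≤ wt(δ f)` for
every asymmetric `f`. -/
def WSC.CobExpander (X : WSC V) (k : ℕ) (Γ : Type u) [AddCommGroup Γ] (β : ℝ) : Prop :=
  (∀ f : (Fin (k + 1) → V) → Γ, X.IsCocycle k f → X.IsCobound k f) ∧
  ∀ f : (Fin (k + 1) → V) → Γ, IsAsym f →
    ∃ g : (Fin k → V) → Γ, IsAsym g ∧
      β * X.cdist f (cobound g) ≤ X.cwt (cobound f)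

/-- The cosystolic expansion constant of `X` on `k`-cochains is at least `β`:
`β · dist(f, Z^k) ≤ wt(δ f)` for every asymmetric `f`. -/
def WSC.CosysExpander (X : WSC V) (k : ℕ) (Γ : Type u) [AddCommGroup Γ] (β : ℝ) : Prop :=
  ∀ f : (Fin (k + 1) → V) → Γ, IsAsym f →
    ∃ z : (Fin (k + 1) → V) → Γ, X.IsCocycle k z ∧
      β * X.cdist f z ≤ X.cwt (cobound f)

section Spectral

/-- weight of a vertex in the 1-skeleton of `X`. -/
def WSC.vertexWeight (X : WSC V) (x : V) : ℝ := X.inducedWeight {x}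

/-- weight of an (ordered) edge of the 1-skeleton of `X`. -/
def WSC.edgeWeight (X : WSC V) (x y : V) : ℝ :=
  if x ≠ y then X.inducedWeight {x, y} else 0

/-- The second largest eigenvalue of the weighted normalized adjacency operator of the
1-skeleton of `X` is at most `lam` (variational formulation: on functions orthogonal to
the constants, the normalized quadratic form is bounded by `lam` times the norm). -/
def WSC.SpectralGapLE (X : WSC V) (lam : ℝ) : Prop :=
  ∀ f : V → ℝ, (∑ x, X.vertexWeight x * f x) = 0 →
    (∑ x, ∑ y, X.edgeWeight x y * f x * f y) / (∑ x, ∑ y, X.edgeWeight x y) ≤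
      lam * ((∑ x, X.vertexWeight x * f x ^ 2) / (∑ x, X.vertexWeight x))

/-- `X` is a `lam`-one-sided local spectral expander: the 1-skeleton of every link
(including the link of the empty face, i.e. `X` itself) has second eigenvalue ≤ `lam`. -/
def WSC.LocalSpectralExpander (X : WSC V) (lam : ℝ) : Prop :=
  X.SpectralGapLE lam ∧ ∀ r ∈ X.faces, (X.link r).SpectralGapLE lam

end Spectral

section Restriction

/-- The restriction of a `(k-1)`-dimensional cochain to (the link of) an ordered face `ρ`:
`g_ρ(σ) = g(ρ ∘ σ)` (concatenation of tuples). -/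
def cochainRestrict {Γ : Type u} [AddCommGroup Γ] {k a b : ℕ} (h : a + b = k)
    (g : (Fin k → V) → Γ) (ρ : Fin a → V) : (Fin b → V) → Γ :=
  fun σ => g fun i => Fin.append ρ σ (Fin.cast h.symm i)

/-- `g ∈ C^k(X,Γ)` is `η`-locally minimal: for every face `r` of dimension `0 ≤ ℓ ≤ k-1`
and every cochain `h ∈ C^{k-ℓ-2}(X_r,Γ)`, `wt(g_r) ≤ wt(g_r + δ h) + η`. -/
def WSC.EtaLocMin (X : WSC V) {Γ : Type u} [AddCommGroup Γ] (k : ℕ) (η : ℝ)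
    (g : (Fin (k + 1) → V) → Γ) : Prop :=
  ∀ (a b : ℕ) (hab : (a + 1) + (b + 1) = k + 1) (ρ : Fin (a + 1) → V),
    X.IsFaceTuple ρ → ∀ h : (Fin b → V) → Γ, IsAsym h →
      (X.link (Finset.image ρ Finset.univ)).cwt (cochainRestrict hab g ρ) ≤
        (X.link (Finset.image ρ Finset.univ)).cwt
          (cochainRestrict hab g ρ + cobound h) + η

/-- The indicator (as a real-valued function on unordered faces) of the support of a
cochain `g`. -/
def suppIndicator {Γ : Type u} [AddCommGroup Γ] {n : ℕ} (g : (Fin n → V) → Γ) :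
    Finset V → ℝ := fun t =>
  if ∃ σ : Fin n → V, Function.Injective σ ∧ Finset.image σ Finset.univ = t ∧ g σ ≠ 0
  then 1 else 0

end Restriction

section Operators

/-- The down averaging operator `D`: `D f(s)` is the average of `f(t)` over faces `t ⊇ s`
with one more vertex, weighted by the induced density. -/
def WSC.downAvg (X : WSC V) (f : Finset V → ℝ) : Finset V → ℝ := fun s =>
  (∑ t : Finset V, if s ⊆ t ∧ t.card = s.card + 1 then X.inducedWeight t * f t else 0) /
    (∑ t : Finset V, if s ⊆ t ∧ t.card = s.card + 1 then X.inducedWeight t else 0)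

/-- The up averaging operator `U`: `U f(t)` is the average of `f(s)` over codimension-one
subfaces `s ⊆ t` (each equally likely). -/
def WSC.upAvg (X : WSC V) (f : Finset V → ℝ) : Finset V → ℝ := fun t =>
  (∑ s : Finset V, if s ⊆ t ∧ s.card + 1 = t.card then f s else 0) / (t.card : ℝ)

/-- The operator `N_{k→j}`: `N f(r) = E_{t ∈ X(k+1), t ⊇ r} [E_{s ⊂ t, |s| = k+1, r ⊄ s} f(s)]`.
(The faces `s ⊂ t` of cardinality `k+1` with `r ⊄ s` are exactly `t.erase v` for `v ∈ r`.) -/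
def WSC.NAvg (X : WSC V) (k : ℕ) (f : Finset V → ℝ) : Finset V → ℝ := fun r =>
  (∑ t : Finset V, if r ⊆ t ∧ t.card = k + 2 then
      X.inducedWeight t * ((∑ x ∈ r, f (t.erase x)) / (r.card : ℝ)) else 0) /
    (∑ t : Finset V, if r ⊆ t ∧ t.card = k + 2 then X.inducedWeight t else 0)

/-- The weighted inner product on real valued functions on `m`-dimensional faces. -/
def WSC.innerAt (X : WSC V) (m : ℕ) (f g : Finset V → ℝ) : ℝ :=
  (∑ r : Finset V, if r.card = m + 1 then X.inducedWeight r * f r * g r else 0) /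
    (∑ r : Finset V, if r.card = m + 1 then X.inducedWeight r else 0)

end Operators

section Partite

/-- `X` is `d`-partite with coloring `col`: colors take `d` values and every face has
pairwise distinct colors (so every top face meets every color class exactly once). -/
def WSC.IsPartite (X : WSC V) (d : ℕ) (col : V → ℕ) : Prop :=
  (∀ x, col x < d) ∧ ∀ s ∈ X.faces, Set.InjOn col ↑s

/-- The color restriction `X^F`: faces whose colors lie in `F`, with top-dimensional
weight induced from `X`. -/
def WSC.colorRestrict (X : WSC V) (col : V → ℕ) (F : Finset ℕ) : WSC V where
  faces := X.faces.filter fun s => Finset.image col s ⊆ F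
  weight := fun t =>
    if t ∈ X.faces ∧ Finset.image col t = F then X.inducedWeight t else 0

/-- `X^F` is `(k,β)`-locally coboundary expanding (with respect to `Γ`): `X^F` is a
coboundary expander with `h^k(X^F,Γ) ≥ β`, and for every `0 ≤ j ≤ k-1` and every face `s`
of dimension `j` with colors disjoint from `F`, `X_s^F` is a coboundary expander with
`h^{k-j-1}(X_s^F,Γ) ≥ β`. -/
def WSC.LocCobExpanding (X : WSC V) (col : V → ℕ) (F : Finset ℕ) (k : ℕ)
    (Γ : Type u) [AddCommGroup Γ] (β : ℝ) : Prop :=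
  (X.colorRestrict col F).CobExpander k Γ β ∧
  ∀ j m : ℕ, j + m + 1 = k → ∀ s ∈ X.faces, s.card = j + 1 →
    Disjoint (Finset.image col s) F →
      ((X.link s).colorRestrict col F).CobExpander m Γ β

end Partite

section NonAbelian

/-! Cochains with coefficients in a possibly non-abelian group `Γ`, in dimensions 0 and 1. -/

variable {Γ : Type u} [Group Γ]

/-- asymmetry for a `Γ`-valued function on ordered edges: `g(uv) = g(vu)⁻¹`. -/
def mAsym (f : (Fin 2 → V) → Γ) : Prop := ∀ x y : V, f ![x, y] * f ![y, x] = 1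

/-- The non-abelian coboundary `δ₀ h (vu) = h(v) h(u)⁻¹`. -/
def mCobound₀ (h : (Fin 1 → V) → Γ) : (Fin 2 → V) → Γ :=
  fun σ => h ![σ 0] * (h ![σ 1])⁻¹

/-- The non-abelian coboundary `δ₁ g (vuw) = g(vu) g(uw) g(wv)`. -/
def mCobound₁ (g : (Fin 2 → V) → Γ) : (Fin 3 → V) → Γ :=
  fun σ => g ![σ 0, σ 1] * g ![σ 1, σ 2] * g ![σ 2, σ 0]

end NonAbelian

/-- Non-abelian coboundary expansion on `0`-cochains with constant `≥ β`:
`Z^0 = B^0` (cocycles are constants) and `β · dist(f, B^0) ≤ wt(δ₀ f)`. -/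
def WSC.MCobExpander₀ (X : WSC V) (Γ : Type u) [Group Γ] (β : ℝ) : Prop :=
  (∀ f : (Fin 1 → V) → Γ, (∀ σ : Fin 2 → V, X.IsFaceTuple σ → mCobound₀ f σ = 1) →
    ∃ γ : Γ, ∀ σ : Fin 1 → V, X.IsFaceTuple σ → f σ = γ) ∧
  ∀ f : (Fin 1 → V) → Γ, ∃ γ : Γ,
    β * X.faceProb 1 (fun σ => f σ ≠ γ) ≤ X.faceProb 2 (fun σ => mCobound₀ f σ ≠ 1)

/-- Non-abelian coboundary expansion on `1`-cochains with constant `≥ β`: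
`Z^1 = B^1` and `β · dist(f, B^1) ≤ wt(δ₁ f)` for every asymmetric `f`. -/
def WSC.MCobExpander₁ (X : WSC V) (Γ : Type u) [Group Γ] (β : ℝ) : Prop :=
  (∀ f : (Fin 2 → V) → Γ, mAsym f →
      (∀ σ : Fin 3 → V, X.IsFaceTuple σ → mCobound₁ f σ = 1) →
      ∃ h : (Fin 1 → V) → Γ, ∀ σ : Fin 2 → V, X.IsFaceTuple σ → f σ = mCobound₀ h σ) ∧
  ∀ f : (Fin 2 → V) → Γ, mAsym f → ∃ h : (Fin 1 → V) → Γ,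
    β * X.faceProb 2 (fun σ => f σ ≠ mCobound₀ h σ) ≤
      X.faceProb 3 (fun σ => mCobound₁ f σ ≠ 1)

/-- Non-abelian cosystolic expansion on `1`-cochains with constant `≥ β`:
`β · dist(f, Z^1) ≤ wt(δ₁ f)` for every asymmetric `f`. -/
def WSC.MCosysExpander₁ (X : WSC V) (Γ : Type u) [Group Γ] (β : ℝ) : Prop :=
  ∀ f : (Fin 2 → V) → Γ, mAsym f →
    ∃ z : (Fin 2 → V) → Γ, mAsym z ∧
      (∀ σ : Fin 3 → V, X.IsFaceTuple σ → mCobound₁ z σ = 1) ∧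
      β * X.faceProb 2 (fun σ => f σ ≠ z σ) ≤
        X.faceProb 3 (fun σ => mCobound₁ f σ ≠ 1)

/-- Non-abelian version of local coboundary expansion of a color restriction, for
`1`-cochains. -/
def WSC.MLocCobExpanding₁ (X : WSC V) (col : V → ℕ) (F : Finset ℕ)
    (Γ : Type u) [Group Γ] (β : ℝ) : Prop :=
  (X.colorRestrict col F).MCobExpander₁ Γ β ∧
  ∀ s ∈ X.faces, s.card = 1 → Disjoint (Finset.image col s) F →
    ((X.link s).colorRestrict col F).MCobExpander₀ Γ β

end

noncomputable section

section GeomLattice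

variable (P : Type v) [Fintype P] [DecidableEq P] [Lattice P] [BoundedOrder P]

/-- `rk` witnesses that the finite bounded lattice `P` is a geometric lattice:
`rk ⊥ = 0`, covers increase the rank by one, the rank function is submodular, and
every element is a join of atoms. -/
def IsGeomLattice (rk : P → ℕ) : Prop :=
  rk (⊥ : P) = 0 ∧
  (∀ x y : P, x ⋖ y → rk y = rk x + 1) ∧
  (∀ x y : P, rk (x ⊔ y) + rk (x ⊓ y) ≤ rk x + rk y) ∧
  ∀ x : P, x = (Finset.univ.filter fun a : P => IsAtom a ∧ a ≤ x).sup id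

/-- The proper part `P ∖ {⊥, ⊤}` of the lattice. -/
abbrev Pbar := {x : P // x ≠ ⊥ ∧ x ≠ ⊤}

/-- The order complex of `P̄ = P ∖ {⊥,⊤}`: faces are the chains of `P̄`, with the
uniform weight on maximal chains (which have `rk ⊤ - 1` elements). -/
def orderComplex (rk : P → ℕ) : WSC (Pbar P) where
  faces := Finset.univ.filter fun s : Finset (Pbar P) =>
    ∀ x ∈ s, ∀ y ∈ s, x.1 ≤ y.1 ∨ y.1 ≤ x.1
  weight := fun s =>
    if (∀ x ∈ s, ∀ y ∈ s, x.1 ≤ y.1 ∨ y.1 ≤ x.1) ∧ s.card = rk (⊤ : P) - 1 then 1 else 0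

/-- `P` is homogeneous: its automorphism group acts transitively on the maximal faces
of the order complex. -/
def IsHomogeneous (rk : P → ℕ) : Prop :=
  ∀ s t : Finset (Pbar P), s ∈ (orderComplex P rk).faces → t ∈ (orderComplex P rk).faces →
    s.card = rk (⊤ : P) - 1 → t.card = rk (⊤ : P) - 1 →
    ∃ φ : P ≃o P, Finset.image (fun x : Pbar P => φ x.1) s
      = Finset.image (fun x : Pbar P => x.1) t

/-- The number of maximal chains of `P̄` containing a given set of elements. -/
def maxChainsThrough (rk : P → ℕ) (s : Finset (Pbar P)) : ℕ :=
  (((orderComplex P rk).faces).filter fun C => C.card = rk (⊤ : P) - 1 ∧ s ⊆ C).card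

/-- The weighted bipartite graph between the rank-`i` and rank-`j` elements of `P̄`,
with an edge `x < y` for `rk x = i`, `rk y = j`, weighted by the number of maximal
chains through `{x,y}` (packaged as a 1-dimensional weighted complex). -/
def bipGraph (rk : P → ℕ) (i j : ℕ) : WSC (Pbar P) where
  faces := Finset.univ.filter fun s : Finset (Pbar P) =>
    ∃ x y : Pbar P, rk x.1 = i ∧ rk y.1 = j ∧ x.1 < y.1 ∧ s ⊆ {x, y}
  weight := fun s =>
    if ∃ x y : Pbar P, rk x.1 = i ∧ rk y.1 = j ∧ x.1 < y.1 ∧ s = {x, y}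
    then (maxChainsThrough P rk s : ℝ) else 0

end GeomLattice

section Building

/-- The vertices of the `SL_n(𝔽)`-spherical building: nonzero proper subspaces of `𝔽ⁿ`. -/
abbrev BVert (𝔽 : Type) [Field 𝔽] (n : ℕ) :=
  {W : Submodule 𝔽 (Fin n → 𝔽) // W ≠ ⊥ ∧ W ≠ ⊤}

noncomputable instance (𝔽 : Type) [Field 𝔽] [Fintype 𝔽] (n : ℕ) :
    Fintype (Submodule 𝔽 (Fin n → 𝔽)) := by
  classical
  haveI : Finite (Submodule 𝔽 (Fin n → 𝔽)) :=
    Finite.of_injective (fun W => (W : Set (Fin n → 𝔽))) SetLike.coe_injective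
  exact Fintype.ofFinite _

noncomputable instance (𝔽 : Type) [Field 𝔽] [Fintype 𝔽] (n : ℕ) : Fintype (BVert 𝔽 n) := by
  classical
  exact Fintype.ofFinite _

/-- The `SL_n(𝔽)`-spherical building: faces are flags of nonzero proper subspaces of `𝔽ⁿ`,
with the uniform weight on complete flags (which have `n - 1` subspaces). -/
noncomputable def building (𝔽 : Type) [Field 𝔽] [Fintype 𝔽] (n : ℕ) : WSC (BVert 𝔽 n) where
  faces := Finset.univ.filter fun s : Finset (BVert 𝔽 n) =>
    ∀ x ∈ s, ∀ y ∈ s, x.1 ≤ y.1 ∨ y.1 ≤ x.1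
  weight := fun s =>
    if (∀ x ∈ s, ∀ y ∈ s, x.1 ≤ y.1 ∨ y.1 ≤ x.1) ∧ s.card = n - 1 then 1 else 0

end Building

section Chains

variable {V : Type w} [Fintype V] [DecidableEq V]

/-- The integral chain corresponding to a single oriented face. -/
def basisChain {n : ℕ} (s : Fin n → V) : (Fin n → V) → ℤ := fun σ =>
  ∑ π : Equiv.Perm (Fin n), if σ = s ∘ π then ((Equiv.Perm.sign π : ℤˣ) : ℤ) else 0

/-- The boundary operator on integral chains (represented as asymmetric functions on
ordered faces): `∂c(τ) = ∑_{v} c(v ::: τ)`. -/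
def bdry {n : ℕ} (c : (Fin (n + 1) → V) → ℤ) : (Fin n → V) → ℤ := fun τ =>
  ∑ x : V, c (Fin.cons x τ)

/-- Asymmetry for integral chains. -/
def IsAsymZ {n : ℕ} (c : (Fin n → V) → ℤ) : Prop :=
  ∀ (σ : Fin n → V) (π : Equiv.Perm (Fin n)),
    c (σ ∘ π) = ((Equiv.Perm.sign π : ℤˣ) : ℤ) * c σ

/-- The support of a chain: the set of (unordered) faces with a nonzero coefficient. -/
def chainSupp {n : ℕ} (c : (Fin n → V) → ℤ) : Finset (Finset V) :=
  Finset.univ.filter fun t => ∃ σ : Fin n → V, Finset.image σ Finset.univ = t ∧ c σ ≠ 0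

/-- The vertex support of a chain. -/
def chainVS {n : ℕ} (c : (Fin n → V) → ℤ) : Finset V :=
  Finset.univ.filter fun x => ∃ σ : Fin n → V, c σ ≠ 0 ∧ x ∈ Set.range σ

/-- An `ℓ`-cone on the complex `Y`: a sequence of `ℤ`-linear maps
`ψ_i : C_i(Y,ℤ) → C_{i+1}(Y,ℤ)` (indexed here by the number `n = i + 1` of vertices)
such that `∂ ψ_j(s) = s - ∑_i (-1)^i ψ_{j-1}(s_i)` for every `j ≤ ℓ` and `s ∈ Y(j)`. -/
structure ConeOn (Y : WSC V) (ℓ : ℕ) where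
  psi : (n : ℕ) → ((Fin n → V) → ℤ) → (Fin (n + 1) → V) → ℤ
  additive : ∀ (n : ℕ) (c c' : (Fin n → V) → ℤ), psi n (c + c') = psi n c + psi n c'
  inComplex : ∀ (n : ℕ) (c : (Fin n → V) → ℤ) (σ : Fin (n + 1) → V),
    psi n c σ ≠ 0 → Y.IsFaceTuple σ
  asymOut : ∀ (n : ℕ) (c : (Fin n → V) → ℤ), IsAsymZ (psi n c)
  coneEq : ∀ n ≤ ℓ, ∀ s : Fin (n + 1) → V, Y.IsFaceTuple s →
    bdry (psi (n + 1) (basisChain s)) =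
      basisChain s -
        ∑ i : Fin (n + 1), ((-1 : ℤ) ^ (i : ℕ)) • psi n (basisChain (s ∘ Fin.succAbove i))

/-- The cone has radius at most `B`: every `ψ(s)` is supported on at most `B` faces. -/
def ConeOn.radiusLE {Y : WSC V} {ℓ : ℕ} (C : ConeOn Y ℓ) (B : ℕ) : Prop :=
  ∀ n ≤ ℓ + 1, ∀ s : Fin n → V, Y.IsFaceTuple s →
    (chainSupp (C.psi n (basisChain s))).card ≤ B

end Chains

section Sequences

/-- `c_0 = 2`, `c_i = c_{i-1} + (i+2)`. -/
def cSeq : ℕ → ℕ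
  | 0 => 2
  | i + 1 => cSeq i + (i + 3)

/-- `n_0 = 4`, `n_i = 2(i+2) - (i+1)² + (i+1) n_{i-1}` (computed in `ℤ`). -/
def nSeqZ : ℕ → ℤ
  | 0 => 4
  | i + 1 => 2 * ((i : ℤ) + 3) - ((i : ℤ) + 2) ^ 2 + ((i : ℤ) + 2) * nSeqZ i

/-- `D_0 = 3`, `D_i = (i+2)(i+1)(D_{i-1} + 1)`. -/
def DSeq : ℕ → ℕ
  | 0 => 3
  | i + 1 => (i + 3) * (i + 2) * (DSeq i + 1)

/-- The set of colors `{ι 0 < ι 1 < ⋯ }` is `k`-suitable: `i₂ ≥ 2 i₁`, and for all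
`0 ≤ j ≤ k-1` and `1 ≤ m ≤ j+2`, `i_{c_j+m} ≥ n_j · i_{c_j} + ∑_{m'=1}^{m-1} i_{c_j+m'}`
(with 1-based indexing `i_t = ι (t-1)`). -/
def SuitableColors (k : ℕ) (ι : ℕ → ℕ) : Prop :=
  2 * ι 0 ≤ ι 1 ∧
  ∀ j m : ℕ, j < k → 1 ≤ m → m ≤ j + 2 →
    nSeqZ j * (ι (cSeq j - 1) : ℤ) +
        ∑ m' ∈ Finset.Ico 1 m, (ι (cSeq j + m' - 1) : ℤ)
      ≤ (ι (cSeq j + m - 1) : ℤ)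

end Sequences

section GoodCone

variable {W : Type w} [Fintype W] [DecidableEq W]

/-- The color restriction of `Y` to the `ℓ` colors `{ι 0, …, ι (ℓ-1)}` admits a `k`-cone
`ψ` of radius at most `D_k` such that moreover `|vs(ψ_j(s))| ≤ n_j` and every vertex of
`vs(ψ_j(s))` outside `s` has color at most `i_{c_j} = ι (c_j - 1)`. -/
def HasGoodCone (Y : WSC W) (colw : W → ℕ) (k ℓ : ℕ) (ι : ℕ → ℕ) : Prop :=
  ∃ C : ConeOn (Y.colorRestrict colw ((Finset.range ℓ).image ι)) k,
    C.radiusLE (DSeq k) ∧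
    ∀ j ≤ k, ∀ s : Fin (j + 1) → W,
      (Y.colorRestrict colw ((Finset.range ℓ).image ι)).IsFaceTuple s →
        ((chainVS (C.psi (j + 1) (basisChain s))).card : ℤ) ≤ nSeqZ j ∧
        ∀ x ∈ chainVS (C.psi (j + 1) (basisChain s)), x ∉ Set.range s →
          colw x ≤ ι (cSeq j - 1)

end GoodCone

end

section DenseUpperBound

variable {V : Type w} [Fintype V] [DecidableEq V]

/-- the `m`-dimensional faces of a complex given by its face set. -/
def uFaces (faces : Finset (Finset V)) (m : ℕ) : Finset (Finset V) :=
  faces.filter fun s => s.card = m + 1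

/-- probability of an event under the uniform distribution on `m`-dimensional faces. -/
noncomputable def uProb (faces : Finset (Finset V)) (m : ℕ) (A : Finset V → Prop) : ℝ :=
  (((uFaces faces m).filter A).card : ℝ) / ((uFaces faces m).card : ℝ)

/-- the coboundary map over `𝔽₂`: `δ f (s) = ∑_{v ∈ s} f (s \ {v})`. -/
def deltaF2 (f : Finset V → ZMod 2) : Finset V → ZMod 2 := fun s =>
  ∑ x ∈ s, f (s.erase x)

set_option linter.unusedSectionVars false

namespace Stmt18Aux

open Finset Real

lemma zmod2_cases (z : ZMod 2) : z = 0 ∨ z = 1 := by revert z; decide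

lemma zmod2_add_self (a : ZMod 2) : a + a = 0 := by revert a; decide

lemma zmod2_add_eq_zero (a b : ZMod 2) : a + b = 0 ↔ a = b := by revert a b; decide

lemma zmod2_add_right (a b : ZMod 2) : a + b = b ↔ a = 0 := by revert a b; decide

/-- the real sign of a bit -/
noncomputable def sgn (z : ZMod 2) : ℝ := if z = 0 then 1 else -1

lemma sgn_one_add (z : ZMod 2) : sgn (1 + z) = - sgn z := by
  have h1 : (1 + 0 : ZMod 2) = 1 := by decide
  have h2 : (1 + 1 : ZMod 2) = 0 := by decide
  have h3 : (1 : ZMod 2) ≠ 0 := by decide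
  rcases zmod2_cases z with h | h <;> subst h <;> simp [sgn, h1, h2, h3]

lemma sgn_mul_self (z : ZMod 2) : sgn z * sgn z = 1 := by
  by_cases h : z = 0 <;> simp [sgn, h]

lemma sgn_eq (z : ZMod 2) : sgn z = 1 - 2 * (if z ≠ 0 then (1:ℝ) else 0) := by
  rcases zmod2_cases z with h | h <;> subst h <;>
    norm_num [sgn, show (1 : ZMod 2) ≠ 0 by decide]

lemma sum_flip {ι : Type*} [Fintype ι] [DecidableEq ι] (e : ι → ZMod 2) (F : (ι → ZMod 2) → ℝ)
    (h : ∀ ω, F (e + ω) = - F ω) : ∑ ω : ι → ZMod 2, F ω = 0 := by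
  have h1 : ∑ ω : ι → ZMod 2, F (e + ω) = ∑ ω : ι → ZMod 2, F ω :=
    Fintype.sum_equiv (Equiv.addLeft e) _ F (fun ω => rfl)
  have h2 : ∑ ω : ι → ZMod 2, F (e + ω) = - ∑ ω : ι → ZMod 2, F ω := by
    rw [Finset.sum_congr rfl (fun ω _ => h ω), Finset.sum_neg_distrib]
  linarith

lemma sum_pow_weight {ι : Type*} [Fintype ι] [DecidableEq ι] (x : ℝ) :
    ∑ ω : ι → ZMod 2, x ^ (Finset.univ.filter fun r => ω r ≠ 0).card
      = (x + 1) ^ Fintype.card ι := by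
  have hbij : Function.Bijective
      (fun ω : ι → ZMod 2 => Finset.univ.filter fun r => ω r ≠ 0) := by
    apply Function.bijective_iff_has_inverse.mpr
    refine ⟨fun T r => if r ∈ T then 1 else 0, fun ω => ?_, fun T => ?_⟩
    · funext r
      simp only [Finset.mem_filter, Finset.mem_univ, true_and]
      rcases zmod2_cases (ω r) with h | h <;> simp [h]
    · ext r
      by_cases h : r ∈ T <;> simp [h]
  rw [Fintype.sum_bijective _ hbij _ (fun T : Finset ι => x ^ T.card) (fun ω => rfl)]
  rw [← Finset.powerset_univ]
  have := Finset.prod_add (fun _ : ι => x) (fun _ : ι => 1) Finset.univ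
  simp only [Finset.prod_const, one_pow, mul_one] at this
  rw [← this, Finset.card_univ]

lemma tail_bound {ι : Type*} [Fintype ι] [DecidableEq ι] (c : ι → ZMod 2) (aR lam : ℝ)
    (hlam : 0 ≤ lam) :
    ((Finset.univ.filter fun ω : ι → ZMod 2 =>
        ((Finset.univ.filter fun r => ω r ≠ c r).card : ℝ) < aR).card : ℝ)
      ≤ Real.exp (lam * aR) * (1 + Real.exp (-lam)) ^ Fintype.card ι := by
  have hinv : ∀ ω : ι → ZMod 2, ω + c + c = ω := by
    intro ω; funext r
    simp [add_assoc, zmod2_add_self]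
  have hcongr : ∀ ω : ι → ZMod 2,
      (Finset.univ.filter fun r => (ω + c) r ≠ 0) =
        (Finset.univ.filter fun r => ω r ≠ c r) := by
    intro ω
    apply Finset.filter_congr
    intro r _
    simp only [Pi.add_apply]
    exact not_congr (zmod2_add_eq_zero _ _)
  have htrans : (Finset.univ.filter fun ω : ι → ZMod 2 =>
        ((Finset.univ.filter fun r => ω r ≠ c r).card : ℝ) < aR).card
      = (Finset.univ.filter fun ω : ι → ZMod 2 =>
        ((Finset.univ.filter fun r => ω r ≠ 0).card : ℝ) < aR).card := by
    apply Finset.card_bij' (fun ω _ => ω + c) (fun ω _ => ω + c)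
    · intro ω hω
      simp only [Finset.mem_filter, Finset.mem_univ, true_and] at hω ⊢
      rwa [hcongr ω]
    · intro ω hω
      simp only [Finset.mem_filter, Finset.mem_univ, true_and] at hω ⊢
      have : (Finset.univ.filter fun r => (ω + c) r ≠ c r)
          = (Finset.univ.filter fun r => ω r ≠ 0) := by
        apply Finset.filter_congr
        intro r _
        simp only [Pi.add_apply]
        exact not_congr (zmod2_add_right _ _)
      rwa [this]
    · intro ω _; exact hinv ω
    · intro ω _; exact hinv ω
  rw [htrans]
  calc ((Finset.univ.filter fun ω : ι → ZMod 2 =>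
        ((Finset.univ.filter fun r => ω r ≠ 0).card : ℝ) < aR).card : ℝ)
      = ∑ ω ∈ (Finset.univ.filter fun ω : ι → ZMod 2 =>
          ((Finset.univ.filter fun r => ω r ≠ 0).card : ℝ) < aR), (1:ℝ) := by simp
    _ ≤ ∑ ω ∈ (Finset.univ.filter fun ω : ι → ZMod 2 =>
          ((Finset.univ.filter fun r => ω r ≠ 0).card : ℝ) < aR),
          Real.exp (lam * (aR - (Finset.univ.filter fun r => ω r ≠ 0).card)) := by
        apply Finset.sum_le_sum
        intro ω hω
        have h2 := (Finset.mem_filter.mp hω).2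
        exact Real.one_le_exp (mul_nonneg hlam (by linarith))
    _ ≤ ∑ ω : ι → ZMod 2,
          Real.exp (lam * (aR - (Finset.univ.filter fun r => ω r ≠ 0).card)) := by
        apply Finset.sum_le_sum_of_subset_of_nonneg (Finset.filter_subset _ _)
        intro ω _ _; exact (Real.exp_pos _).le
    _ = ∑ ω : ι → ZMod 2, Real.exp (lam * aR) *
          Real.exp (-lam) ^ (Finset.univ.filter fun r => ω r ≠ 0).card := by
        apply Finset.sum_congr rfl
        intro ω _
        rw [← Real.exp_nat_mul, ← Real.exp_add]
        congr 1
        ring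
    _ = Real.exp (lam * aR) * ∑ ω : ι → ZMod 2,
          Real.exp (-lam) ^ (Finset.univ.filter fun r => ω r ≠ 0).card := by
        rw [Finset.mul_sum]
    _ = Real.exp (lam * aR) * (1 + Real.exp (-lam)) ^ Fintype.card ι := by
        rw [sum_pow_weight, add_comm]

lemma exp_cubic {t : ℝ} (h : |t| ≤ 1) :
    Real.exp t ≤ 1 + t + t ^ 2 / 2 + |t| ^ 3 * (2 / 9) := by
  have h3 := Real.exp_bound h (n := 3) (by norm_num)
  have hs : ∑ m ∈ Finset.range 3, t ^ m / (m.factorial : ℝ) = 1 + t + t ^ 2 / 2 := by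
    simp [Finset.sum_range_succ, Nat.factorial]
  rw [hs] at h3
  have h4 : (3 : ℕ).succ = 4 := rfl
  have h5 : ((3:ℕ).factorial : ℝ) = 6 := by norm_num [Nat.factorial]
  have := (abs_le.mp h3).2
  rw [h4, h5] at this
  norm_num at this ⊢
  linarith

lemma per_coord {ε : ℝ} (h0 : 0 ≤ ε) (h1 : ε ≤ 1 / 2) :
    Real.exp ((4 * ε) * (1 / 2 - ε)) * (1 + Real.exp (-(4 * ε)))
      ≤ 2 * Real.exp (-(10 / 9) * ε ^ 2) := by
  set t : ℝ := 2 * ε with ht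
  have ht0 : 0 ≤ t := by positivity
  have ht1 : t ≤ 1 := by rw [ht]; linarith
  have habs : |t| = t := abs_of_nonneg ht0
  have e1 := exp_cubic (t := t) (by rwa [habs])
  have e2 := exp_cubic (t := -t) (by rwa [abs_neg, habs])
  rw [habs] at e1
  rw [abs_neg, habs] at e2
  have ht3 : t ^ 3 ≤ t ^ 2 := pow_le_pow_of_le_one ht0 ht1 (by norm_num)
  have hsum : Real.exp t + Real.exp (-t) ≤ 2 + (13 / 9) * t ^ 2 := by nlinarith
  have hexp : 2 + (13 / 9) * t ^ 2 ≤ 2 * Real.exp ((13 / 18) * t ^ 2) := by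
    have := Real.add_one_le_exp ((13 / 18) * t ^ 2)
    nlinarith
  have lhs_eq : Real.exp ((4 * ε) * (1 / 2 - ε)) * (1 + Real.exp (-(4 * ε)))
      = Real.exp (-(4 * ε ^ 2)) * (Real.exp t + Real.exp (-t)) := by
    rw [mul_add, mul_one, ← Real.exp_add, mul_add, ← Real.exp_add, ← Real.exp_add]
    congr 1 <;> rw [ht] <;> ring_nf
  rw [lhs_eq]
  calc Real.exp (-(4 * ε ^ 2)) * (Real.exp t + Real.exp (-t))
      ≤ Real.exp (-(4 * ε ^ 2)) * (2 * Real.exp ((13 / 18) * t ^ 2)) := by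
        apply mul_le_mul_of_nonneg_left (hsum.trans hexp) (Real.exp_pos _).le
    _ = 2 * Real.exp (-(10 / 9) * ε ^ 2) := by
        rw [mul_comm (Real.exp _), mul_assoc, ← Real.exp_add]
        congr 2
        rw [ht]; ring

lemma card_univ_fun (K : Finset (Finset V)) :
    (Finset.univ : Finset ({s // s ∈ K} → ZMod 2)).card = 2 ^ K.card := by
  simp [Finset.card_univ, Fintype.card_fun, Fintype.card_coe]

/-- extension of a cochain defined on `K` by zero -/
def extOmega (K : Finset (Finset V)) (ω : {s // s ∈ K} → ZMod 2) : Finset V → ZMod 2 :=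
  fun s => if h : s ∈ K then ω ⟨s, h⟩ else 0

lemma extOmega_pos (K : Finset (Finset V)) (ω : {s // s ∈ K} → ZMod 2) {s : Finset V}
    (h : s ∈ K) : extOmega K ω s = ω ⟨s, h⟩ := dif_pos h

lemma extOmega_add (K : Finset (Finset V)) (ω ω' : {s // s ∈ K} → ZMod 2) :
    extOmega K (ω + ω') = extOmega K ω + extOmega K ω' := by
  funext s
  simp only [extOmega, Pi.add_apply]
  by_cases h : s ∈ K <;> simp [h]

lemma deltaF2_add (f g : Finset V → ZMod 2) (s : Finset V) :
    deltaF2 (f + g) s = deltaF2 f s + deltaF2 g s := by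
  simp [deltaF2, Finset.sum_add_distrib]

/-- the unit vector at `r : K` -/
def eVec (K : Finset (Finset V)) (r : {s // s ∈ K}) : {s // s ∈ K} → ZMod 2 :=
  fun r' => if r' = r then 1 else 0

lemma extOmega_eVec (K : Finset (Finset V)) (r : {s // s ∈ K}) :
    extOmega K (eVec K r) = fun s => if s = (r : Finset V) then 1 else 0 := by
  funext s
  by_cases h : s ∈ K
  · simp only [extOmega, dif_pos h, eVec]
    congr 1
    simp [Subtype.ext_iff]
  · rw [extOmega, dif_neg h, if_neg]
    intro hs
    exact h (hs ▸ r.2)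

lemma deltaF2_indicator {r s : Finset V} (hcard : r.card + 1 = s.card) :
    deltaF2 (fun t => if t = r then (1 : ZMod 2) else 0) s = if r ⊆ s then 1 else 0 := by
  rw [deltaF2]
  rw [Finset.sum_boole]
  by_cases hsub : r ⊆ s
  · rw [if_pos hsub]
    have hd : (s \ r).card = 1 := by
      rw [Finset.card_sdiff_of_subset hsub]
      omega
    obtain ⟨a, ha⟩ := Finset.card_eq_one.mp hd
    have hamem : a ∈ s \ r := ha ▸ Finset.mem_singleton_self a
    have has : a ∈ s := (Finset.mem_sdiff.mp hamem).1
    have hanr : a ∉ r := (Finset.mem_sdiff.mp hamem).2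
    have hfil : (s.filter fun x => s.erase x = r) = {a} := by
      ext x
      simp only [Finset.mem_filter, Finset.mem_singleton]
      constructor
      · rintro ⟨hxs, hxe⟩
        have hxr : x ∉ r := hxe ▸ Finset.notMem_erase x s
        have : x ∈ s \ r := Finset.mem_sdiff.mpr ⟨hxs, hxr⟩
        rw [ha] at this
        exact Finset.mem_singleton.mp this
      · rintro rfl
        refine ⟨has, ?_⟩
        have hsub2 : r ⊆ s.erase x := fun y hy =>
          Finset.mem_erase.mpr ⟨fun hya => hanr (hya ▸ hy), hsub hy⟩
        have hc2 : (s.erase x).card ≤ r.card := by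
          rw [Finset.card_erase_of_mem has]
          omega
        exact (Finset.eq_of_subset_of_card_le hsub2 hc2).symm
    rw [hfil]
    simp
  · rw [if_neg hsub]
    have hfil : (s.filter fun x => s.erase x = r) = ∅ := by
      ext x
      simp only [Finset.mem_filter, Finset.notMem_empty, iff_false, not_and]
      intro _ hxe
      exact absurd (hxe ▸ Finset.erase_subset x s) hsub
    rw [hfil]
    simp
  
end Stmt18Aux

namespace Stmt18Aux

set_option maxHeartbeats 800000 in
/-- union bound + Chernoff: few `ω` are close to some coboundary -/
lemma bad1_bound {ι κ : Type*} [Fintype ι] [DecidableEq ι] [Fintype κ] [DecidableEq κ]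
    (ψ : (κ → ZMod 2) → ι → ZMod 2) (ε : ℝ) (hε0 : 0 ≤ ε) (hεle : ε ≤ 1 / 2)
    (n j : ℕ) (hn : Fintype.card ι = n) (hj : Fintype.card κ = j) (hjpos : 0 < j)
    (h8m : 8 * (j : ℝ) ≤ ε ^ 2 * n) :
    ((Finset.univ.filter fun ω : ι → ZMod 2 => ∃ u : κ → ZMod 2,
        ((Finset.univ.filter fun r => ω r ≠ ψ u r).card : ℝ) < (1 / 2 - ε) * n).card : ℝ)
      ≤ (2 : ℝ) ^ n / 128 := by
  set aR : ℝ := (1 / 2 - ε) * n with haR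
  have hsubset : (Finset.univ.filter fun ω : ι → ZMod 2 => ∃ u : κ → ZMod 2,
        ((Finset.univ.filter fun r => ω r ≠ ψ u r).card : ℝ) < aR)
      ⊆ Finset.univ.biUnion (fun u : κ → ZMod 2 =>
          Finset.univ.filter fun ω : ι → ZMod 2 =>
            ((Finset.univ.filter fun r => ω r ≠ ψ u r).card : ℝ) < aR) := by
    intro ω hω
    obtain ⟨u, hu⟩ := (Finset.mem_filter.mp hω).2
    exact Finset.mem_biUnion.mpr ⟨u, Finset.mem_univ u,
      Finset.mem_filter.mpr ⟨Finset.mem_univ ω, hu⟩⟩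
  have hstep1 : (((Finset.univ.filter fun ω : ι → ZMod 2 => ∃ u : κ → ZMod 2,
        ((Finset.univ.filter fun r => ω r ≠ ψ u r).card : ℝ) < aR).card : ℕ) : ℝ) ≤
      ∑ u : κ → ZMod 2, Real.exp ((4 * ε) * aR) * (1 + Real.exp (-(4 * ε))) ^ n := by
    calc (((Finset.univ.filter fun ω : ι → ZMod 2 => ∃ u : κ → ZMod 2,
          ((Finset.univ.filter fun r => ω r ≠ ψ u r).card : ℝ) < aR).card : ℕ) : ℝ)
        ≤ (((Finset.univ.biUnion (fun u : κ → ZMod 2 =>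
            Finset.univ.filter fun ω : ι → ZMod 2 =>
              ((Finset.univ.filter fun r => ω r ≠ ψ u r).card : ℝ) < aR)).card : ℕ) : ℝ) := by
          exact_mod_cast Finset.card_le_card hsubset
      _ ≤ ∑ u : κ → ZMod 2,
            ((Finset.univ.filter fun ω : ι → ZMod 2 =>
              ((Finset.univ.filter fun r => ω r ≠ ψ u r).card : ℝ) < aR).card : ℝ) := by
          exact_mod_cast Finset.card_biUnion_le
      _ ≤ _ := by
          apply Finset.sum_le_sum
          intro u _
          have := tail_bound (ψ u) aR (4 * ε) (by positivity)
          rwa [hn] at this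
  have hcardκ : (Finset.univ : Finset (κ → ZMod 2)).card = 2 ^ j := by
    rw [Finset.card_univ, Fintype.card_fun, ZMod.card, hj]
  rw [Finset.sum_const, hcardκ, nsmul_eq_mul] at hstep1
  have hper : Real.exp ((4 * ε) * aR) * (1 + Real.exp (-(4 * ε))) ^ n
      ≤ (2 : ℝ) ^ n * Real.exp (-(80 / 9) * j) := by
    have h1 : Real.exp ((4 * ε) * aR) = (Real.exp ((4 * ε) * (1 / 2 - ε))) ^ n := by
      rw [← Real.exp_nat_mul]
      congr 1
      rw [haR]; ring
    rw [h1, ← mul_pow]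
    calc (Real.exp ((4 * ε) * (1 / 2 - ε)) * (1 + Real.exp (-(4 * ε)))) ^ n
        ≤ (2 * Real.exp (-(10 / 9) * ε ^ 2)) ^ n := by
          apply pow_le_pow_left₀ (by positivity) (per_coord hε0 hεle)
      _ = (2 : ℝ) ^ n * Real.exp ((n : ℝ) * (-(10 / 9) * ε ^ 2)) := by
          rw [mul_pow, Real.exp_nat_mul]
      _ ≤ (2 : ℝ) ^ n * Real.exp (-(80 / 9) * j) := by
          apply mul_le_mul_of_nonneg_left _ (by positivity)
          apply Real.exp_le_exp.mpr
          nlinarith [h8m]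
  have hq : (2 : ℝ) * Real.exp (-(80 / 9)) ≤ 1 / 128 := by
    have h2e : (2 : ℝ) ≤ Real.exp 1 := by
      have := Real.add_one_le_exp 1; linarith
    have h256 : (256 : ℝ) ≤ Real.exp 8 := by
      have hp : ((2 : ℝ)) ^ (8 : ℕ) ≤ (Real.exp 1) ^ (8 : ℕ) :=
        pow_le_pow_left₀ (by norm_num) h2e 8
      rw [← Real.exp_nat_mul] at hp
      norm_num at hp ⊢
      linarith
    have h8le : Real.exp 8 ≤ Real.exp (80 / 9 : ℝ) := Real.exp_le_exp.mpr (by norm_num)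
    have hinv : (Real.exp ((80 : ℝ) / 9))⁻¹ ≤ (256 : ℝ)⁻¹ := by
      apply inv_anti₀ (by norm_num)
      linarith
    rw [Real.exp_neg]
    nlinarith [hinv]
  calc ((Finset.univ.filter fun ω : ι → ZMod 2 => ∃ u : κ → ZMod 2,
        ((Finset.univ.filter fun r => ω r ≠ ψ u r).card : ℝ) < aR).card : ℝ)
      ≤ (2 : ℝ) ^ j * (Real.exp ((4 * ε) * aR) * (1 + Real.exp (-(4 * ε))) ^ n) := by
        rw [show ((2 ^ j : ℕ) : ℝ) = (2 : ℝ) ^ j by push_cast; ring] at hstep1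
        exact hstep1
    _ ≤ (2 : ℝ) ^ j * ((2 : ℝ) ^ n * Real.exp (-(80 / 9) * j)) :=
        mul_le_mul_of_nonneg_left hper (by positivity)
    _ = (2 : ℝ) ^ n * ((2 : ℝ) * Real.exp (-(80 / 9))) ^ j := by
        rw [mul_pow, show Real.exp (-(80 / 9) * j) = Real.exp (-(80 / 9 : ℝ)) ^ j by
          rw [← Real.exp_nat_mul]; congr 1; ring]
        ring
    _ ≤ (2 : ℝ) ^ n * ((1 : ℝ) / 128) ^ j := by
        apply mul_le_mul_of_nonneg_left _ (by positivity)
        exact pow_le_pow_left₀ (by positivity) hq j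
    _ ≤ (2 : ℝ) ^ n / 128 := by
        have h1 : ((1 : ℝ) / 128) ^ j ≤ ((1 : ℝ) / 128) ^ 1 :=
          pow_le_pow_of_le_one (by norm_num) (by norm_num) hjpos
        rw [pow_one] at h1
        exact le_trans (mul_le_mul_of_nonneg_left h1 (by positivity)) (le_of_eq (by ring))

set_option maxHeartbeats 800000 in
/-- Chebyshev with pairwise independence: the coboundary of a random cochain
has weight close to 1/2 -/
lemma bad2_bound (faces : Finset (Finset V)) (k : ℕ)
    (hdown : ∀ s ∈ faces, ∀ t, t ⊆ s → t ∈ faces)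
    (ε : ℝ) (hεpos : 0 < ε)
    (h9 : (9 : ℝ) ≤ ε ^ 2 * (uFaces faces (k + 1)).card)
    (hMr : (0 : ℝ) < ((uFaces faces (k + 1)).card : ℝ)) :
    ((Finset.univ.filter fun ω : {s // s ∈ uFaces faces k} → ZMod 2 =>
        (1 / 2 + ε) * ((uFaces faces (k + 1)).card : ℝ) <
          (((uFaces faces (k + 1)).filter fun s =>
            deltaF2 (extOmega (uFaces faces k) ω) s ≠ 0).card : ℝ)).card : ℝ)
      ≤ (2 : ℝ) ^ (uFaces faces k).card / 36 := by
  set N : ℕ := (uFaces faces k).card with hN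
  set M : ℕ := (uFaces faces (k + 1)).card with hM
  have hcardΩ : (Finset.univ : Finset ({s // s ∈ uFaces faces k} → ZMod 2)).card
      = 2 ^ N := by
    rw [card_univ_fun, ← hN]
  have horth : ∀ s ∈ uFaces faces (k + 1), ∀ t ∈ uFaces faces (k + 1), s ≠ t →
      ∑ ω : {s // s ∈ uFaces faces k} → ZMod 2,
        sgn (deltaF2 (extOmega (uFaces faces k) ω) s) *
        sgn (deltaF2 (extOmega (uFaces faces k) ω) t) = 0 := by
    intro s hs t ht hst
    obtain ⟨hsf1, hsf2⟩ := Finset.mem_filter.mp hs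
    obtain ⟨htf1, htf2⟩ := Finset.mem_filter.mp ht
    have hnsub : ¬ s ⊆ t := by
      intro h
      exact hst (Finset.eq_of_subset_of_card_le h (by rw [hsf2, htf2]))
    obtain ⟨v, hvs, hvt⟩ := Finset.not_subset.mp hnsub
    obtain ⟨x, hxs, hxv⟩ := Finset.exists_mem_ne (by rw [hsf2]; omega) v
    have herase_card : (s.erase x).card = k + 1 := by
      rw [Finset.card_erase_of_mem hxs, hsf2]; omega
    have hr0K : s.erase x ∈ uFaces faces k :=
      Finset.mem_filter.mpr ⟨hdown s hsf1 _ (Finset.erase_subset x s), herase_card⟩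
    have hr0s : s.erase x ⊆ s := Finset.erase_subset x s
    have hr0t : ¬ s.erase x ⊆ t := by
      intro h
      exact hvt (h (Finset.mem_erase.mpr ⟨fun hvx => hxv hvx.symm, hvs⟩))
    set e := eVec (uFaces faces k) ⟨s.erase x, hr0K⟩ with he
    apply sum_flip e
    intro ω
    have hds : deltaF2 (extOmega (uFaces faces k) (e + ω)) s
        = 1 + deltaF2 (extOmega (uFaces faces k) ω) s := by
      rw [extOmega_add, deltaF2_add, he, extOmega_eVec]
      congr 1
      rw [deltaF2_indicator (show (s.erase x).card + 1 = s.card by rw [herase_card, hsf2])]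
      exact if_pos hr0s
    have hdt : deltaF2 (extOmega (uFaces faces k) (e + ω)) t
        = deltaF2 (extOmega (uFaces faces k) ω) t := by
      rw [extOmega_add, deltaF2_add, he, extOmega_eVec]
      rw [deltaF2_indicator (show (s.erase x).card + 1 = t.card by rw [herase_card, htf2])]
      rw [if_neg hr0t, zero_add]
    rw [hds, hdt, sgn_one_add]
    ring
  have hdiag : ∀ s ∈ uFaces faces (k + 1),
      ∑ ω : {s // s ∈ uFaces faces k} → ZMod 2,
        sgn (deltaF2 (extOmega (uFaces faces k) ω) s) *
        sgn (deltaF2 (extOmega (uFaces faces k) ω) s) = (2 : ℝ) ^ N := by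
    intro s _
    rw [Finset.sum_congr rfl (fun ω _ => sgn_mul_self _), Finset.sum_const,
      hcardΩ, nsmul_eq_mul]
    push_cast; ring
  have hsq : ∑ ω : {s // s ∈ uFaces faces k} → ZMod 2,
      (∑ s ∈ uFaces faces (k + 1), sgn (deltaF2 (extOmega (uFaces faces k) ω) s)) ^ 2
      = (M : ℝ) * 2 ^ N := by
    calc ∑ ω : {s // s ∈ uFaces faces k} → ZMod 2,
          (∑ s ∈ uFaces faces (k + 1), sgn (deltaF2 (extOmega (uFaces faces k) ω) s)) ^ 2
        = ∑ ω : {s // s ∈ uFaces faces k} → ZMod 2, ∑ s ∈ uFaces faces (k + 1),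
            ∑ t ∈ uFaces faces (k + 1),
              sgn (deltaF2 (extOmega (uFaces faces k) ω) s) *
              sgn (deltaF2 (extOmega (uFaces faces k) ω) t) := by
          apply Finset.sum_congr rfl
          intro ω _
          rw [sq, Finset.sum_mul_sum]
      _ = ∑ s ∈ uFaces faces (k + 1), ∑ ω : {s // s ∈ uFaces faces k} → ZMod 2,
            ∑ t ∈ uFaces faces (k + 1),
              sgn (deltaF2 (extOmega (uFaces faces k) ω) s) *
              sgn (deltaF2 (extOmega (uFaces faces k) ω) t) := Finset.sum_comm
      _ = ∑ s ∈ uFaces faces (k + 1), ∑ t ∈ uFaces faces (k + 1),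
            ∑ ω : {s // s ∈ uFaces faces k} → ZMod 2,
              sgn (deltaF2 (extOmega (uFaces faces k) ω) s) *
              sgn (deltaF2 (extOmega (uFaces faces k) ω) t) := by
          exact Finset.sum_congr rfl (fun s _ => Finset.sum_comm)
      _ = ∑ s ∈ uFaces faces (k + 1), ∑ t ∈ uFaces faces (k + 1),
            (if t = s then (2 : ℝ) ^ N else 0) := by
          apply Finset.sum_congr rfl
          intro s hs
          apply Finset.sum_congr rfl
          intro t ht
          by_cases hts : t = s
          · subst hts
            rw [if_pos rfl]
            exact hdiag t ht
          · rw [if_neg hts]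
            exact horth s hs t ht (fun h => hts h.symm)
      _ = ∑ s ∈ uFaces faces (k + 1), (2 : ℝ) ^ N := by
          apply Finset.sum_congr rfl
          intro s hs
          rw [Finset.sum_ite_eq' (uFaces faces (k + 1)) s (fun _ => (2 : ℝ) ^ N),
            if_pos hs]
      _ = (M : ℝ) * 2 ^ N := by
          rw [Finset.sum_const, nsmul_eq_mul, ← hM]
  have hSg : ∀ ω : {s // s ∈ uFaces faces k} → ZMod 2,
      ∑ s ∈ uFaces faces (k + 1), sgn (deltaF2 (extOmega (uFaces faces k) ω) s)
        = (M : ℝ) - 2 * (((uFaces faces (k + 1)).filter fun s =>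
            deltaF2 (extOmega (uFaces faces k) ω) s ≠ 0).card : ℝ) := by
    intro ω
    rw [Finset.sum_congr rfl (fun s _ => sgn_eq _), Finset.sum_sub_distrib,
      Finset.sum_const, ← Finset.mul_sum, Finset.sum_boole, nsmul_eq_mul, ← hM]
    ring
  have hcheb : (((Finset.univ.filter fun ω : {s // s ∈ uFaces faces k} → ZMod 2 =>
        (1 / 2 + ε) * (M : ℝ) <
          (((uFaces faces (k + 1)).filter fun s =>
            deltaF2 (extOmega (uFaces faces k) ω) s ≠ 0).card : ℝ)).card : ℕ) : ℝ)
        * (2 * ε * M) ^ 2 ≤ (M : ℝ) * 2 ^ N := by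
    set bad2 := Finset.univ.filter fun ω : {s // s ∈ uFaces faces k} → ZMod 2 =>
        (1 / 2 + ε) * (M : ℝ) <
          (((uFaces faces (k + 1)).filter fun s =>
            deltaF2 (extOmega (uFaces faces k) ω) s ≠ 0).card : ℝ) with hbad2
    have heq1 : ((bad2.card : ℕ) : ℝ) * (2 * ε * (M : ℝ)) ^ 2
        = ∑ ω ∈ bad2, (2 * ε * (M : ℝ)) ^ 2 := by
      rw [Finset.sum_const, nsmul_eq_mul]
    rw [heq1]
    calc ∑ ω ∈ bad2, (2 * ε * (M : ℝ)) ^ 2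
        ≤ ∑ ω ∈ bad2, (∑ s ∈ uFaces faces (k + 1),
            sgn (deltaF2 (extOmega (uFaces faces k) ω) s)) ^ 2 := by
          apply Finset.sum_le_sum
          intro ω hω
          have hmem := (Finset.mem_filter.mp hω).2
          rw [hSg ω]
          have h1 : 2 * ε * (M : ℝ) ≤ -((M : ℝ) - 2 * (((uFaces faces (k + 1)).filter
              fun s => deltaF2 (extOmega (uFaces faces k) ω) s ≠ 0).card : ℝ)) := by
            linarith
          have h2 : (0 : ℝ) ≤ 2 * ε * M := by positivity
          calc (2 * ε * (M : ℝ)) ^ 2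
              ≤ (-((M : ℝ) - 2 * (((uFaces faces (k + 1)).filter
                  fun s => deltaF2 (extOmega (uFaces faces k) ω) s ≠ 0).card : ℝ))) ^ 2 :=
                pow_le_pow_left₀ h2 h1 2
            _ = ((M : ℝ) - 2 * (((uFaces faces (k + 1)).filter
                  fun s => deltaF2 (extOmega (uFaces faces k) ω) s ≠ 0).card : ℝ)) ^ 2 := by
                ring
      _ ≤ ∑ ω : {s // s ∈ uFaces faces k} → ZMod 2,
            (∑ s ∈ uFaces faces (k + 1),
              sgn (deltaF2 (extOmega (uFaces faces k) ω) s)) ^ 2 := by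
          apply Finset.sum_le_sum_of_subset_of_nonneg (Finset.filter_subset _ _)
          intro ω _ _
          exact sq_nonneg _
      _ = (M : ℝ) * 2 ^ N := hsq
  have h36 : 36 * (M : ℝ) ≤ (2 * ε * M) ^ 2 := by nlinarith [h9, hMr]
  rw [le_div_iff₀ (by norm_num : (0 : ℝ) < 36)]
  apply le_of_mul_le_mul_right _ hMr
  calc ((Finset.univ.filter fun ω : {s // s ∈ uFaces faces k} → ZMod 2 =>
        (1 / 2 + ε) * ((uFaces faces (k + 1)).card : ℝ) <
          (((uFaces faces (k + 1)).filter fun s =>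
            deltaF2 (extOmega (uFaces faces k) ω) s ≠ 0).card : ℝ)).card : ℝ) * 36 * M
      = ((Finset.univ.filter fun ω : {s // s ∈ uFaces faces k} → ZMod 2 =>
        (1 / 2 + ε) * ((uFaces faces (k + 1)).card : ℝ) <
          (((uFaces faces (k + 1)).filter fun s =>
            deltaF2 (extOmega (uFaces faces k) ω) s ≠ 0).card : ℝ)).card : ℝ) * (36 * M) := by
        ring
    _ ≤ ((Finset.univ.filter fun ω : {s // s ∈ uFaces faces k} → ZMod 2 =>
        (1 / 2 + ε) * ((uFaces faces (k + 1)).card : ℝ) <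
          (((uFaces faces (k + 1)).filter fun s =>
            deltaF2 (extOmega (uFaces faces k) ω) s ≠ 0).card : ℝ)).card : ℝ)
          * (2 * ε * M) ^ 2 :=
        mul_le_mul_of_nonneg_left h36 (Nat.cast_nonneg _)
    _ ≤ (M : ℝ) * 2 ^ N := hcheb
    _ = (2 : ℝ) ^ N * M := by ring

end Stmt18Aux


set_option maxHeartbeats 800000

open Stmt18Aux

/-- In a pure `d`-dimensional complex with uniform distributions on all
levels, with `ε = max(√(8|X(k-1)|/|X(k)|), √(9/|X(k+1)|)) ≤ 1/2`, there is an
`𝔽₂`-cochain `f ∈ C^k` at distance at least `1/2 - ε` from every coboundary whose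
coboundary has weight at most `1/2 + ε`; consequently its expansion ratio is at most
`(1/2+ε)/(1/2-ε)`. -/
theorem stmt_18 (faces : Finset (Finset V)) (d k : ℕ) (hk : 1 ≤ k) (hd : k + 1 ≤ d)
    (hempty : ∅ ∈ faces)
    (hdown : ∀ s ∈ faces, ∀ t, t ⊆ s → t ∈ faces)
    (hpure : ∀ s ∈ faces, ∃ mx ∈ faces, s ⊆ mx ∧ mx.card = d + 1)
    (ε : ℝ)
    (hε : ε = max
      (Real.sqrt (8 * ((uFaces faces (k - 1)).card : ℝ) / ((uFaces faces k).card : ℝ)))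
      (Real.sqrt (9 / ((uFaces faces (k + 1)).card : ℝ))))
    (hεle : ε ≤ 1 / 2) :
    ∃ f : Finset V → ZMod 2,
      (∀ g : Finset V → ZMod 2, 1 / 2 - ε ≤ uProb faces k (fun s => f s ≠ deltaF2 g s)) ∧
      uProb faces (k + 1) (fun s => deltaF2 f s ≠ 0) ≤ 1 / 2 + ε ∧
      ∀ g : Finset V → ZMod 2,
        uProb faces (k + 1) (fun s => deltaF2 f s ≠ 0) ≤
          (1 / 2 + ε) / (1 / 2 - ε) * uProb faces k (fun s => f s ≠ deltaF2 g s) := by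
  classical
  set N : ℕ := (uFaces faces k).card with hN
  set M : ℕ := (uFaces faces (k + 1)).card with hM
  set m : ℕ := (uFaces faces (k - 1)).card with hm
  -- nonemptiness of levels
  have hsub : ∀ j : ℕ, j + 1 ≤ d + 1 → (uFaces faces j).Nonempty := by
    intro j hj
    obtain ⟨mx, hmx, -, hmxcard⟩ := hpure ∅ hempty
    obtain ⟨t, hts, htcard⟩ := Finset.exists_subset_card_eq (s := mx) (n := j + 1)
      (by rw [hmxcard]; exact hj)
    exact ⟨t, Finset.mem_filter.mpr ⟨hdown mx hmx t hts, htcard⟩⟩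
  have hNpos : 0 < N := Finset.card_pos.mpr (hsub k (by omega))
  have hMpos : 0 < M := Finset.card_pos.mpr (hsub (k + 1) (by omega))
  have hmpos : 0 < m := Finset.card_pos.mpr (hsub (k - 1) (by omega))
  have hNr : (0 : ℝ) < N := by exact_mod_cast hNpos
  have hMr : (0 : ℝ) < M := by exact_mod_cast hMpos
  -- basic facts about ε
  have hε0 : 0 ≤ ε := by
    rw [hε]; exact le_trans (Real.sqrt_nonneg _) (le_max_left _ _)
  have h9 : (9 : ℝ) ≤ ε ^ 2 * M := by
    have h1 : Real.sqrt (9 / (M : ℝ)) ≤ ε := by rw [hε]; exact le_max_right _ _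
    have h2 : (9 : ℝ) / M ≤ ε ^ 2 := by
      have hsq := Real.sq_sqrt (show (0 : ℝ) ≤ 9 / M by positivity)
      nlinarith [Real.sqrt_nonneg ((9 : ℝ) / M)]
    rwa [div_le_iff₀ hMr] at h2
  have h8m : 8 * (m : ℝ) ≤ ε ^ 2 * N := by
    have h1 : Real.sqrt (8 * (m : ℝ) / N) ≤ ε := by rw [hε]; exact le_max_left _ _
    have h2 : 8 * (m : ℝ) / N ≤ ε ^ 2 := by
      have hsq := Real.sq_sqrt (show (0 : ℝ) ≤ 8 * (m : ℝ) / N by positivity)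
      nlinarith [Real.sqrt_nonneg (8 * (m : ℝ) / N)]
    rwa [div_le_iff₀ hNr] at h2
  have hεpos : 0 < ε := by
    rcases hε0.lt_or_eq with h | h
    · exact h
    · exfalso; rw [← h] at h9; norm_num at h9
  rcases lt_or_eq_of_le hεle with hlt | heq
  swap
  · -- degenerate case ε = 1/2 : take f = 0
    have hd0 : ∀ s, deltaF2 (0 : Finset V → ZMod 2) s = 0 := by
      intro s; simp [deltaF2]
    have hzero : uProb faces (k + 1) (fun s => deltaF2 (0 : Finset V → ZMod 2) s ≠ 0) = 0 := by
      simp only [uProb]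
      rw [Finset.filter_congr_decidable]
      rw [Finset.filter_false_of_mem (fun s _ => by simp [hd0])]
      simp
    refine ⟨0, fun g => ?_, ?_, fun g => ?_⟩
    · have h0 : (1 : ℝ) / 2 - ε = 0 := by rw [← heq]; ring
      rw [h0]
      unfold uProb
      positivity
    · rw [hzero]; linarith
    · rw [hzero, show (1 : ℝ) / 2 - ε = 0 by rw [← heq]; ring, div_zero, zero_mul]
  -- main case: ε < 1/2
  set bad1 : Finset ({s // s ∈ uFaces faces k} → ZMod 2) :=
    Finset.univ.filter fun ω => ∃ u : {s // s ∈ uFaces faces (k - 1)} → ZMod 2,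
      ((Finset.univ.filter fun r : {s // s ∈ uFaces faces k} =>
        ω r ≠ deltaF2 (extOmega (uFaces faces (k - 1)) u) (r : Finset V)).card : ℝ)
        < (1 / 2 - ε) * N
    with hbad1
  set bad2 : Finset ({s // s ∈ uFaces faces k} → ZMod 2) :=
    Finset.univ.filter fun ω => (1 / 2 + ε) * (M : ℝ) <
      (((uFaces faces (k + 1)).filter fun s =>
        deltaF2 (extOmega (uFaces faces k) ω) s ≠ 0).card : ℝ)
    with hbad2
  have hb1 : (bad1.card : ℝ) ≤ (2 : ℝ) ^ N / 128 :=
    bad1_bound (fun u (r : {s // s ∈ uFaces faces k}) =>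
        deltaF2 (extOmega (uFaces faces (k - 1)) u) (r : Finset V))
      ε hε0 hεle N m (Fintype.card_coe _) (Fintype.card_coe _) hmpos h8m
  have hb2 : (bad2.card : ℝ) ≤ (2 : ℝ) ^ N / 36 :=
    bad2_bound faces k hdown ε hεpos h9 hMr
  have hcardΩ : (Finset.univ : Finset ({s // s ∈ uFaces faces k} → ZMod 2)).card
      = 2 ^ N := by
    rw [card_univ_fun, ← hN]
  -- a good ω exists
  obtain ⟨ω, hω⟩ : ∃ ω : {s // s ∈ uFaces faces k} → ZMod 2, ω ∉ bad1 ∪ bad2 := by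
    by_contra h
    push_neg at h
    have hsub2 : (Finset.univ : Finset ({s // s ∈ uFaces faces k} → ZMod 2)) ⊆ bad1 ∪ bad2 :=
      fun x _ => h x
    have h1 : (2 : ℕ) ^ N ≤ (bad1 ∪ bad2).card := by
      have := Finset.card_le_card hsub2
      rwa [hcardΩ] at this
    have h2 : ((bad1 ∪ bad2).card : ℝ) ≤ (bad1.card : ℝ) + bad2.card := by
      exact_mod_cast Finset.card_union_le bad1 bad2
    have h3 : ((2 : ℕ) ^ N : ℝ) ≤ (bad1 ∪ bad2).card := by exact_mod_cast h1
    have hpow : (0 : ℝ) < (2 : ℝ) ^ N := by positivity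
    push_cast at h3
    linarith [hb1, hb2]
  rw [Finset.mem_union, not_or] at hω
  obtain ⟨hω1, hω2⟩ := hω
  rw [hbad1, Finset.mem_filter, not_and] at hω1
  have hω1' := hω1 (Finset.mem_univ _)
  push_neg at hω1'
  rw [hbad2, Finset.mem_filter, not_and] at hω2
  have hω2' := not_lt.mp (hω2 (Finset.mem_univ _))
  -- the witness
  set f : Finset V → ZMod 2 := extOmega (uFaces faces k) ω with hf
  -- counting translation for condition 1
  have hdelta : ∀ (g : Finset V → ZMod 2), ∀ s ∈ uFaces faces k,
      deltaF2 (extOmega (uFaces faces (k - 1)) (fun j => g (j : Finset V))) s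
        = deltaF2 g s := by
    intro g s hs
    have hsf := Finset.mem_filter.mp hs
    rw [deltaF2, deltaF2]
    apply Finset.sum_congr rfl
    intro x hx
    have hKx : s.erase x ∈ uFaces faces (k - 1) := by
      apply Finset.mem_filter.mpr
      constructor
      · exact hdown s hsf.1 _ (Finset.erase_subset x s)
      · rw [Finset.card_erase_of_mem hx]; omega
    rw [extOmega, dif_pos hKx]
  have hcount : ∀ g : Finset V → ZMod 2,
      ((uFaces faces k).filter fun s => f s ≠ deltaF2 g s).card
        = ((Finset.univ.filter fun r : {s // s ∈ uFaces faces k} =>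
            ω r ≠ deltaF2 (extOmega (uFaces faces (k - 1))
              (fun j => g (j : Finset V))) (r : Finset V)).card) := by
    intro g
    refine Finset.card_bij'
      (fun (s : Finset V)
          (hs : s ∈ (uFaces faces k).filter fun s => f s ≠ deltaF2 g s) =>
        (⟨s, (Finset.mem_filter.mp hs).1⟩ : {s // s ∈ uFaces faces k}))
      (fun (r : {s // s ∈ uFaces faces k}) (_ : r ∈ Finset.univ.filter
          fun r : {s // s ∈ uFaces faces k} =>
            ω r ≠ deltaF2 (extOmega (uFaces faces (k - 1))
              (fun j => g (j : Finset V))) (r : Finset V)) =>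
        (r : Finset V)) ?_ ?_ ?_ ?_
    · intro s hs
      obtain ⟨hsK, hsp⟩ := Finset.mem_filter.mp hs
      apply Finset.mem_filter.mpr
      refine ⟨Finset.mem_univ _, ?_⟩
      have h1 : ω (⟨s, hsK⟩ : {s // s ∈ uFaces faces k}) = f s := by
        rw [hf]; exact (extOmega_pos _ _ hsK).symm
      rw [h1, hdelta g s hsK]
      exact hsp
    · intro r hr
      have hrp := (Finset.mem_filter.mp hr).2
      apply Finset.mem_filter.mpr
      refine ⟨r.2, ?_⟩
      have h1 : f (r : Finset V) = ω r := by
        rw [hf]; exact extOmega_pos _ _ r.2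
      rw [h1, ← hdelta g (r : Finset V) r.2]
      exact hrp
    · intro s hs; rfl
    · intro r hr; rfl
  -- the three conclusions
  have main1 : ∀ g : Finset V → ZMod 2,
      1 / 2 - ε ≤ uProb faces k (fun s => f s ≠ deltaF2 g s) := by
    intro g
    have hcnt : (1 / 2 - ε) * N ≤
        (((uFaces faces k).filter fun s => f s ≠ deltaF2 g s).card : ℝ) := by
      rw [hcount g]
      exact hω1' (fun j => g (j : Finset V))
    simp only [uProb]
    rw [Finset.filter_congr_decidable]
    rw [le_div_iff₀ hNr]
    exact hcnt
  have main2 : uProb faces (k + 1) (fun s => deltaF2 f s ≠ 0) ≤ 1 / 2 + ε := by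
    simp only [uProb]
    rw [Finset.filter_congr_decidable]
    rw [div_le_iff₀ hMr]
    exact hω2'
  refine ⟨f, main1, main2, ?_⟩
  intro g
  have hpos2 : (0 : ℝ) < 1 / 2 - ε := by linarith
  have hratio : 0 ≤ (1 / 2 + ε) / (1 / 2 - ε) := by positivity
  calc uProb faces (k + 1) (fun s => deltaF2 f s ≠ 0)
      ≤ 1 / 2 + ε := main2
    _ = (1 / 2 + ε) / (1 / 2 - ε) * (1 / 2 - ε) :=
        (div_mul_cancel₀ _ (ne_of_gt hpos2)).symm
    _ ≤ (1 / 2 + ε) / (1 / 2 - ε) * uProb faces k (fun s => f s ≠ deltaF2 g s) :=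
        mul_le_mul_of_nonneg_left (main1 g) hratio

end DenseUpperBound
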